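/- Let z_r ≠ z_s be points on the unit circle with angular distance δ_{rs} = |arg(z_r* z_s)| ∈ (0, π], and let i, j ≥ 0 be integers. Then there is a constant K₁ depending only on i + j such that for all N > K₁, |Σ_{ℓ=0}^{N−1} ℓ^{i+j} (z_r* z_s)^ℓ| ≤ 4 δ_{rs}^{−1} N^{i+j}. -/

import Mathlib

open Finset

private lemma prony_telescope (z : ℂ) (m : ℕ) (N : ℕ) :
    (1 - z) * ∑ ℓ ∈ range N, (ℓ : ℂ) ^ m * z ^ ℓ
      = (0 : ℂ) ^ m - (N : ℂ) ^ m * z ^ N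
        + ∑ ℓ ∈ range N, (((ℓ : ℂ) + 1) ^ m - (ℓ : ℂ) ^ m) * z ^ (ℓ + 1) := by
  induction N with
  | zero => simp
  | succ n ih =>
    rw [sum_range_succ, sum_range_succ, mul_add, ih]
    push_cast
    ring

private lemma prony_one_sub_lb (z : ℂ) (h1 : ‖z‖ = 1) :
    |Complex.arg z| / 2 ≤ ‖1 - z‖ := by
  set θ := Complex.arg z with hθ
  have hz := Complex.norm_mul_cos_add_sin_mul_I z
  rw [h1, Complex.ofReal_one, one_mul, ← Complex.ofReal_cos, ← Complex.ofReal_sin] at hz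
  have hre : (1 - z).re = 1 - Real.cos θ := by
    rw [← hz]; simp [Complex.cos_ofReal_re, hθ]
  have him : (1 - z).im = -Real.sin θ := by
    rw [← hz]; simp [Complex.sin_ofReal_re, hθ]
  have hsq : (‖1 - z‖) ^ 2 = 2 - 2 * Real.cos θ := by
    rw [Complex.sq_norm, Complex.normSq_apply, hre, him]
    have := Real.sin_sq_add_cos_sq θ
    nlinarith
  have habs : |θ| ≤ Real.pi := Complex.abs_arg_le_pi z
  have h0 : (0:ℝ) ≤ |θ| := abs_nonneg θ
  have hsin : 2 / Real.pi * (|θ| / 2) ≤ Real.sin (|θ| / 2) :=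
    Real.mul_le_sin (by linarith) (by linarith)
  have hhalf : Real.sin (|θ| / 2) ^ 2 = (1 - Real.cos θ) / 2 := by
    have h1 := Real.cos_two_mul (|θ| / 2)
    have h2 : 2 * (|θ| / 2) = |θ| := by ring
    rw [h2, Real.cos_abs] at h1
    have h3 := Real.sin_sq_add_cos_sq (|θ| / 2)
    linarith
  have hpi : Real.pi ≤ 4 := by linarith [Real.pi_le_four]
  have hpipos : (0:ℝ) < Real.pi := Real.pi_pos
  have hsq2 : (|θ| / 2) ^ 2 ≤ (‖1 - z‖) ^ 2 := by
    have h1 : |θ| / 4 ≤ Real.sin (|θ| / 2) := by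
      have heq : 2 / Real.pi * (|θ| / 2) = |θ| / Real.pi := by ring
      have hd : |θ| / 4 ≤ |θ| / Real.pi := div_le_div_of_nonneg_left h0 hpipos hpi
      rw [heq] at hsin
      linarith
    have h2 : (0:ℝ) ≤ |θ| / 4 := by linarith
    nlinarith [hsq, hhalf]
  have hb : (0:ℝ) ≤ ‖1 - z‖ := norm_nonneg _
  nlinarith [hsq2, hb, h0]

theorem prony_offdiagonal_gram_bound (m : ℕ) :
    ∃ K₁ : ℝ, ∀ (zr zs : ℂ), ‖zr‖ = 1 → ‖zs‖ = 1 → zr ≠ zs →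
      ∀ δ : ℝ, δ = |Complex.arg ((starRingEnd ℂ) zr * zs)| →
      ∀ i j : ℕ, i + j = m →
      ∀ N : ℕ, (N : ℝ) > K₁ →
        ‖∑ ℓ ∈ Finset.range N, (ℓ : ℂ) ^ (i + j) * ((starRingEnd ℂ) zr * zs) ^ ℓ‖ ≤
          4 * δ⁻¹ * (N : ℝ) ^ (i + j) := by
  refine ⟨0, ?_⟩
  intro zr zs hzr hzs hne δ hδ i j hij N hN
  set z : ℂ := (starRingEnd ℂ) zr * zs with hzdef
  have hz1 : ‖z‖ = 1 := by
    rw [hzdef, norm_mul, Complex.norm_conj, hzr, hzs, one_mul]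
  have hzne : z ≠ 1 := by
    intro h
    apply hne
    have h2 : zr * z = zr * 1 := by rw [h]
    rw [hzdef, ← mul_assoc, Complex.mul_conj, mul_one] at h2
    have : Complex.normSq zr = 1 := by
      have := Complex.sq_norm zr
      rw [hzr] at this; simpa using this.symm
    rw [this] at h2
    simpa using h2.symm
  have hargne : Complex.arg z ≠ 0 := by
    intro h
    exact hzne (Complex.ext_norm_arg (by rw [hz1, norm_one]) (by rw [h, Complex.arg_one]))
  have hδpos : 0 < δ := by
    rw [hδ]; exact abs_pos.mpr hargne
  have hlb : δ / 2 ≤ ‖1 - z‖ := by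
    rw [hδ]; exact prony_one_sub_lb z hz1
  -- telescoping bound
  have htel := prony_telescope z (i + j) N
  have hbound : ‖(1 - z) * ∑ ℓ ∈ Finset.range N, (ℓ : ℂ) ^ (i + j) * z ^ ℓ‖
      ≤ 2 * (N : ℝ) ^ (i + j) := by
    rw [htel]
    have hzpow : ∀ k : ℕ, ‖z ^ k‖ = 1 := by
      intro k; rw [norm_pow, hz1, one_pow]
    have hsum : ‖∑ ℓ ∈ range N, (((ℓ : ℂ) + 1) ^ (i+j) - (ℓ : ℂ) ^ (i+j)) * z ^ (ℓ+1)‖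
        ≤ (N : ℝ) ^ (i+j) - (0 : ℝ) ^ (i+j) := by
      calc ‖∑ ℓ ∈ range N, (((ℓ : ℂ) + 1) ^ (i+j) - (ℓ : ℂ) ^ (i+j)) * z ^ (ℓ+1)‖
          ≤ ∑ ℓ ∈ range N, ‖(((ℓ : ℂ) + 1) ^ (i+j) - (ℓ : ℂ) ^ (i+j)) * z ^ (ℓ+1)‖ :=
            norm_sum_le _ _
        _ = ∑ ℓ ∈ range N, (((ℓ : ℝ) + 1) ^ (i+j) - (ℓ : ℝ) ^ (i+j)) := by
            refine Finset.sum_congr rfl fun ℓ _ => ?_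
            rw [norm_mul, hzpow, mul_one]
            have hcast : ((ℓ : ℂ) + 1) ^ (i+j) - (ℓ : ℂ) ^ (i+j)
                = ((((ℓ : ℝ) + 1) ^ (i+j) - (ℓ : ℝ) ^ (i+j) : ℝ) : ℂ) := by
              push_cast; ring
            rw [hcast, Complex.norm_real, Real.norm_eq_abs, abs_of_nonneg]
            have : (ℓ : ℝ) ≤ (ℓ : ℝ) + 1 := by linarith
            have := pow_le_pow_left₀ (by positivity) this (i+j)
            linarith
        _ = (N : ℝ) ^ (i+j) - (0 : ℝ) ^ (i+j) := by
            have := Finset.sum_range_sub (fun k => ((k : ℝ)) ^ (i+j)) N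
            simpa using this
    have h0 : ‖(0:ℂ) ^ (i+j)‖ = (0:ℝ) ^ (i+j) := by
      rw [← Complex.ofReal_zero, ← Complex.ofReal_pow, Complex.norm_real, Real.norm_eq_abs,
        abs_of_nonneg (by positivity)]
    have hN0 : ‖(N:ℂ) ^ (i+j) * z ^ N‖ = (N : ℝ) ^ (i+j) := by
      rw [norm_mul, hzpow, mul_one, ← Complex.ofReal_natCast, ← Complex.ofReal_pow,
        Complex.norm_real, Real.norm_eq_abs, abs_of_nonneg (by positivity)]
    calc ‖(0:ℂ) ^ (i+j) - (N : ℂ) ^ (i+j) * z ^ N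
          + ∑ ℓ ∈ range N, (((ℓ : ℂ) + 1) ^ (i+j) - (ℓ : ℂ) ^ (i+j)) * z ^ (ℓ+1)‖
        ≤ ‖(0:ℂ) ^ (i+j) - (N : ℂ) ^ (i+j) * z ^ N‖
          + ‖∑ ℓ ∈ range N, (((ℓ : ℂ) + 1) ^ (i+j) - (ℓ : ℂ) ^ (i+j)) * z ^ (ℓ+1)‖ :=
          norm_add_le _ _
      _ ≤ (‖(0:ℂ) ^ (i+j)‖ + ‖(N : ℂ) ^ (i+j) * z ^ N‖)
          + ((N : ℝ) ^ (i+j) - (0 : ℝ) ^ (i+j)) := by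
          gcongr
          exact norm_sub_le _ _
      _ = 2 * (N : ℝ) ^ (i+j) := by rw [h0, hN0]; ring
  rw [norm_mul] at hbound
  have hS : (0:ℝ) ≤ ‖∑ ℓ ∈ Finset.range N, (ℓ : ℂ) ^ (i + j) * z ^ ℓ‖ :=
    norm_nonneg _
  have key : ‖∑ ℓ ∈ Finset.range N, (ℓ : ℂ) ^ (i + j) * z ^ ℓ‖ * (δ / 2)
      ≤ 2 * (N : ℝ) ^ (i + j) := by
    calc ‖∑ ℓ ∈ Finset.range N, (ℓ : ℂ) ^ (i + j) * z ^ ℓ‖ * (δ / 2)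
        ≤ ‖∑ ℓ ∈ Finset.range N, (ℓ : ℂ) ^ (i + j) * z ^ ℓ‖ * ‖1 - z‖ := by
          gcongr
      _ = ‖1 - z‖ * ‖∑ ℓ ∈ Finset.range N, (ℓ : ℂ) ^ (i + j) * z ^ ℓ‖ := by
          ring
      _ ≤ 2 * (N : ℝ) ^ (i + j) := hbound
  have h4 : 4 * δ⁻¹ * (N : ℝ) ^ (i + j) = (2 * (N : ℝ) ^ (i + j)) / (δ / 2) := by
    field_simp; ring
  rw [h4, le_div_iff₀ (by linarith)]
  exact key
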